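/- For any symmetric positive definite n×n matrix A and any symmetric n×n matrix B, Tr(A B A^{-1} B) ≤ Cond(A) · Tr(B²), where Cond(A) = d_1(A)/d_n(A) is the ratio of the largest to the smallest eigenvalue of A. -/
import Mathlib


open Matrix

set_option maxHeartbeats 1000000

/-- For `A` symmetric positive definite and `B` symmetric,
`Tr(A B A⁻¹ B) ≤ Cond(A) · Tr(B²)` where `Cond(A) = d₁(A)/dₙ(A)`. -/
theorem stmt7 {n : ℕ} (A B : Matrix (Fin n) (Fin n) ℝ)
    (hA : A.PosDef) (hB : B.IsHermitian) :
    (A * B * A⁻¹ * B).trace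
      ≤ ((⨆ i, hA.1.eigenvalues i) / (⨅ i, hA.1.eigenvalues i)) * (B * B).trace := by
  rcases isEmpty_or_nonempty (Fin n) with he | hne
  · simp [Matrix.trace]
  set h := hA.1 with hh
  set d : Fin n → ℝ := h.eigenvalues with hd
  have hdpos : ∀ i, 0 < d i := fun i => hA.eigenvalues_pos i
  set U : Matrix (Fin n) (Fin n) ℝ := (h.eigenvectorUnitary : Matrix (Fin n) (Fin n) ℝ) with hUdef
  have hU1 : U * star U = 1 := (Matrix.mem_unitaryGroup_iff).mp h.eigenvectorUnitary.2
  have hU2 : star U * U = 1 := (Matrix.mem_unitaryGroup_iff').mp h.eigenvectorUnitary.2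
  have hAeq : A = U * diagonal d * star U := by
    have := h.spectral_theorem
    simpa [hUdef] using this
  have hDinv : diagonal d * diagonal (fun i => (d i)⁻¹) = 1 := by
    have hfun : (fun i => d i * (d i)⁻¹) = fun _ => (1:ℝ) :=
      funext fun i => mul_inv_cancel₀ (hdpos i).ne'
    rw [diagonal_mul_diagonal, hfun, diagonal_one]
  have hAinv : A⁻¹ = U * diagonal (fun i => (d i)⁻¹) * star U := by
    apply Matrix.inv_eq_right_inv
    rw [hAeq]
    calc U * diagonal d * star U * (U * diagonal (fun i => (d i)⁻¹) * star U)
        = U * (diagonal d * (star U * U) * diagonal (fun i => (d i)⁻¹)) * star U := by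
          noncomm_ring
      _ = 1 := by rw [hU2, mul_one, hDinv, mul_one, hU1]
  set C : Matrix (Fin n) (Fin n) ℝ := star U * B * U with hCdef
  have hC : Cᴴ = C := by
    simp only [hCdef, star_eq_conjTranspose, conjTranspose_mul, conjTranspose_conjTranspose,
      hB.eq]
    rw [mul_assoc]
  have hCsymm : ∀ i j, C j i = C i j := by
    intro i j
    have h2 := congrFun (congrFun hC j) i
    simpa [Matrix.conjTranspose_apply] using h2.symm
  have htr1 : (A * B * A⁻¹ * B).trace
      = (diagonal d * C * diagonal (fun i => (d i)⁻¹) * C).trace := by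
    have e1 : A * B * A⁻¹ * B
        = U * (diagonal d * star U * B * U * diagonal (fun i => (d i)⁻¹) * star U * B) := by
      rw [hAinv, hAeq]
      noncomm_ring
    have e2 : (diagonal d * star U * B * U * diagonal (fun i => (d i)⁻¹) * star U * B) * U
        = diagonal d * C * diagonal (fun i => (d i)⁻¹) * C := by
      rw [hCdef]
      noncomm_ring
    rw [e1, Matrix.trace_mul_comm, e2]
  have htr2 : (B * B).trace = (C * C).trace := by
    have hc : C * C = star U * (B * B) * U := by
      calc C * C = star U * (B * (U * star U) * B) * U := by simp only [hCdef]; noncomm_ring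
        _ = star U * (B * B) * U := by rw [hU1, mul_one]
    rw [hc, Matrix.trace_mul_comm (star U * (B * B)) U,
      show U * (star U * (B * B)) = (U * star U) * (B * B) by noncomm_ring, hU1, one_mul]
  rw [htr1, htr2]
  -- expand traces as sums
  have hentry : ∀ i j, (diagonal d * C * diagonal (fun i => (d i)⁻¹)) i j
      = d i * C i j * (d j)⁻¹ := by
    intro i j
    rw [Matrix.mul_diagonal, Matrix.diagonal_mul]
  have hLHS : (diagonal d * C * diagonal (fun i => (d i)⁻¹) * C).trace
      = ∑ i, ∑ j, d i * C i j * (d j)⁻¹ * C i j := by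
    rw [Matrix.trace]
    refine Finset.sum_congr rfl fun i _ => ?_
    rw [Matrix.diag_apply, Matrix.mul_apply]
    refine Finset.sum_congr rfl fun j _ => ?_
    rw [hentry, hCsymm i j]
  have hRHS : (C * C).trace = ∑ i, ∑ j, C i j * C i j := by
    rw [Matrix.trace]
    refine Finset.sum_congr rfl fun i _ => ?_
    rw [Matrix.diag_apply, Matrix.mul_apply]
    exact Finset.sum_congr rfl fun j _ => by rw [hCsymm i j]
  rw [hLHS, hRHS, Finset.mul_sum]
  -- sup/inf facts
  have hbddA : BddAbove (Set.range d) := Set.Finite.bddAbove (Set.finite_range d)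
  have hbddB : BddBelow (Set.range d) := Set.Finite.bddBelow (Set.finite_range d)
  have hsup : ∀ i, d i ≤ ⨆ i, d i := fun i => le_ciSup hbddA i
  have hinf : ∀ i, (⨅ i, d i) ≤ d i := fun i => ciInf_le hbddB i
  have hinfpos : 0 < ⨅ i, d i := by
    obtain ⟨j, hj⟩ := Finite.exists_min d
    have : d j ≤ ⨅ i, d i := le_ciInf hj
    exact lt_of_lt_of_le (hdpos j) this
  refine Finset.sum_le_sum fun i _ => ?_
  rw [Finset.mul_sum]
  refine Finset.sum_le_sum fun j _ => ?_
  have hsq : (0:ℝ) ≤ C i j * C i j := mul_self_nonneg _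
  have hratio : d i * (d j)⁻¹ ≤ (⨆ i, d i) / (⨅ i, d i) := by
    rw [← div_eq_mul_inv]
    exact div_le_div₀ ((hdpos i).le.trans (hsup i)) (hsup i) hinfpos (hinf j)
  calc d i * C i j * (d j)⁻¹ * C i j = (d i * (d j)⁻¹) * (C i j * C i j) := by ring
    _ ≤ ((⨆ i, d i) / (⨅ i, d i)) * (C i j * C i j) :=
        mul_le_mul_of_nonneg_right hratio hsq
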